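/- Let H₁, H₂ be real Hilbert spaces, g : H₁ → ℝ ∪ {∞} proper convex lower semicontinuous, L : H₁ → H₂ a bounded linear operator with L* L : H₁ → H₁ surjective, λ > 0 and c ∈ H₂. Then the functional I(u) = g(u) + (λ/2)‖L u + c‖² has a unique minimizer on H₁. -/

import Mathlib

open scoped RealInnerProductSpace

/-- Convexity for extended-real-valued functions. -/
def EConvex {H : Type*} [NormedAddCommGroup H] [InnerProductSpace ℝ H]
    (g : H → EReal) : Prop :=
  ∀ x y : H, ∀ a b : ℝ, 0 ≤ a → 0 ≤ b → a + b = 1 →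
    g (a • x + b • y) ≤ (a : EReal) * g x + (b : EReal) * g y

/-- Properness for extended-real-valued functions. -/
def EProper {H : Type*} [NormedAddCommGroup H] [InnerProductSpace ℝ H]
    (g : H → EReal) : Prop :=
  (∃ x, g x ≠ ⊤) ∧ ∀ x, g x ≠ ⊥

/-- A proper convex lower semicontinuous extended-real-valued function has a continuous
affine minorant. -/
lemma exists_affine_minorant {H : Type*} [NormedAddCommGroup H] [InnerProductSpace ℝ H]
    (g : H → EReal) (hgp : EProper g) (hgc : EConvex g) (hglsc : LowerSemicontinuous g) :
    ∃ (ψ : H →L[ℝ] ℝ) (b : ℝ), ∀ x, ((ψ x + b : ℝ) : EReal) ≤ g x := by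
  obtain ⟨⟨x₀, hx₀⟩, hbot⟩ := hgp
  set epi : Set (H × ℝ) := {p | g p.1 ≤ (p.2 : EReal)} with hepi
  have hclosed : IsClosed epi := by
    rw [← isOpen_compl_iff, isOpen_iff_mem_nhds]
    rintro ⟨x, t⟩ hp
    simp only [hepi, Set.mem_compl_iff, Set.mem_setOf_eq, not_le] at hp
    obtain ⟨y, hty, hyg⟩ := EReal.exists_between_coe_real hp
    have h1 : ∀ᶠ z in nhds x, (y : EReal) < g z := hglsc x _ hyg
    have h2 : Set.Iio y ∈ nhds t := Iio_mem_nhds (EReal.coe_lt_coe_iff.1 hty)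
    rw [nhds_prod_eq]
    filter_upwards [Filter.prod_mem_prod h1 h2] with p hpp
    simp only [Set.mem_prod, Set.mem_setOf_eq, Set.mem_Iio] at hpp
    simp only [hepi, Set.mem_compl_iff, Set.mem_setOf_eq, not_le]
    exact lt_trans (EReal.coe_lt_coe_iff.2 hpp.2) hpp.1
  have hconv : Convex ℝ epi := by
    rintro ⟨x, s⟩ hx ⟨y, t⟩ hy a b ha hb hab
    simp only [hepi, Set.mem_setOf_eq] at hx hy ⊢
    have h1 : g (a • x + b • y) ≤ (a : EReal) * g x + (b : EReal) * g y := hgc x y a b ha hb hab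
    have h2 : (a : EReal) * g x ≤ (a : EReal) * (s : EReal) :=
      mul_le_mul_of_nonneg_left hx (by exact_mod_cast ha)
    have h3 : (b : EReal) * g y ≤ (b : EReal) * (t : EReal) :=
      mul_le_mul_of_nonneg_left hy (by exact_mod_cast hb)
    have : g (a • x + b • y) ≤ ((a * s + b * t : ℝ) : EReal) := by
      rw [EReal.coe_add, EReal.coe_mul, EReal.coe_mul]
      exact le_trans h1 (add_le_add h2 h3)
    simpa using this
  set g₀ : ℝ := (g x₀).toReal with hg₀
  have hgx₀ : g x₀ = (g₀ : EReal) := (EReal.coe_toReal hx₀ (hbot x₀)).symm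
  have hpnot : (x₀, g₀ - 1) ∉ epi := by
    simp only [hepi, Set.mem_setOf_eq, not_le, hgx₀]
    exact_mod_cast sub_one_lt g₀
  obtain ⟨f, u, hfu, hepif⟩ := geometric_hahn_banach_point_closed hconv hclosed hpnot
  set β : ℝ := f (0, 1) with hβ
  have hsplit : ∀ (x : H) (t : ℝ), f (x, t) = f (x, 0) + t * β := by
    intro x t
    have : (x, t) = (x, 0) + t • ((0 : H), (1 : ℝ)) := by
      simp [Prod.ext_iff]
    rw [this, map_add, map_smul]
    simp [hβ, smul_eq_mul]
  have hβpos : 0 < β := by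
    have h1 : f (x₀, g₀ - 1) < u := hfu
    have h2 : u < f (x₀, g₀) := hepif (x₀, g₀) (by simp [hepi, hgx₀])
    rw [hsplit] at h1 h2
    nlinarith
  refine ⟨(-β⁻¹) • (f.comp (ContinuousLinearMap.inl ℝ H ℝ)), u / β, ?_⟩
  intro x
  by_cases hx : g x = ⊤
  · simp [hx]
  · have hmem : (x, (g x).toReal) ∈ epi := by
      simp [hepi, (EReal.coe_toReal hx (hbot x)).symm.le]
    have h2 : u < f (x, (g x).toReal) := hepif _ hmem
    rw [hsplit] at h2
    have h3 : (-β⁻¹) * f (x, 0) + u / β ≤ (g x).toReal := by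
      have he : (-β⁻¹) * f (x, 0) + u / β = (u - f (x, 0)) / β := by
        field_simp
        ring
      rw [he, div_le_iff₀ hβpos]
      nlinarith
    calc (((-β⁻¹) • (f.comp (ContinuousLinearMap.inl ℝ H ℝ))) x + u / β : ℝ)
        = (((-β⁻¹) * f (x, 0) + u / β : ℝ) : EReal) := by
          simp [ContinuousLinearMap.smul_apply, smul_eq_mul]
      _ ≤ (((g x).toReal : ℝ) : EReal) := EReal.coe_le_coe_iff.2 h3
      _ = g x := EReal.coe_toReal hx (hbot x)

/-- If `L* L` is surjective then `L` is bounded below. -/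
lemma exists_coercive {H₁ H₂ : Type*}
    [NormedAddCommGroup H₁] [InnerProductSpace ℝ H₁] [CompleteSpace H₁]
    [NormedAddCommGroup H₂] [InnerProductSpace ℝ H₂] [CompleteSpace H₂]
    (L : H₁ →L[ℝ] H₂)
    (hsurj : Function.Surjective (fun u => (ContinuousLinearMap.adjoint L) (L u))) :
    ∃ D : ℝ, 0 ≤ D ∧ ∀ u, ‖u‖ ≤ D * ‖L u‖ := by
  set T : H₁ →L[ℝ] H₁ := (ContinuousLinearMap.adjoint L).comp L with hT
  have hTsurj : Function.Surjective T := hsurj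
  have hTapp : ∀ u, T u = (ContinuousLinearMap.adjoint L) (L u) := fun u => rfl
  have hLker : ∀ u, T u = 0 → L u = 0 := by
    intro w hw
    have h1 : ⟪L w, L w⟫ = ⟪T w, w⟫ := by
      rw [hTapp, ContinuousLinearMap.adjoint_inner_left]
    rw [hw, inner_zero_left] at h1
    exact inner_self_eq_zero.1 h1
  have hTinj : Function.Injective T := by
    rw [injective_iff_map_eq_zero]
    intro w hw
    obtain ⟨v, hv⟩ := hTsurj w
    have h1 : ⟪w, w⟫ = ⟪L v, L w⟫ := by
      rw [← hv, hTapp, ContinuousLinearMap.adjoint_inner_left]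
    rw [hLker w hw, inner_zero_right] at h1
    exact inner_self_eq_zero.1 h1
  have hker : LinearMap.ker (T : H₁ →ₗ[ℝ] H₁) = ⊥ := LinearMap.ker_eq_bot.2 hTinj
  have hrange : LinearMap.range (T : H₁ →ₗ[ℝ] H₁) = ⊤ := LinearMap.range_eq_top.2 hTsurj
  set e := ContinuousLinearEquiv.ofBijective T hker hrange with he
  set C : ℝ := ‖(e.symm : H₁ →L[ℝ] H₁)‖ with hC
  refine ⟨C * ‖ContinuousLinearMap.adjoint L‖, by positivity, fun w => ?_⟩
  have h1 : ‖w‖ ≤ C * ‖T w‖ := by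
    have : (e.symm : H₁ →L[ℝ] H₁) (T w) = w := by
      simp [he, ContinuousLinearEquiv.ofBijective_symm_apply_apply]
    calc ‖w‖ = ‖(e.symm : H₁ →L[ℝ] H₁) (T w)‖ := by rw [this]
      _ ≤ C * ‖T w‖ := (e.symm : H₁ →L[ℝ] H₁).le_opNorm _
  have h2 : ‖T w‖ ≤ ‖ContinuousLinearMap.adjoint L‖ * ‖L w‖ := by
    rw [hTapp]
    exact (ContinuousLinearMap.adjoint L).le_opNorm _
  calc ‖w‖ ≤ C * ‖T w‖ := h1
    _ ≤ C * (‖ContinuousLinearMap.adjoint L‖ * ‖L w‖) := by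
        apply mul_le_mul_of_nonneg_left h2 (by positivity)
    _ = C * ‖ContinuousLinearMap.adjoint L‖ * ‖L w‖ := by ring

theorem stmt_9 {H₁ H₂ : Type*}
    [NormedAddCommGroup H₁] [InnerProductSpace ℝ H₁] [CompleteSpace H₁]
    [NormedAddCommGroup H₂] [InnerProductSpace ℝ H₂] [CompleteSpace H₂]
    (g : H₁ → EReal) (hgp : EProper g) (hgc : EConvex g) (hglsc : LowerSemicontinuous g)
    (L : H₁ →L[ℝ] H₂)
    (hsurj : Function.Surjective (fun u => (ContinuousLinearMap.adjoint L) (L u)))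
    (lam : ℝ) (hlam : 0 < lam) (c : H₂) :
    ∃! uhat : H₁, ∀ u : H₁,
      g uhat + ((lam / 2 * ‖L uhat + c‖ ^ 2 : ℝ) : EReal) ≤
      g u + ((lam / 2 * ‖L u + c‖ ^ 2 : ℝ) : EReal) := by
  obtain ⟨ψ, b, hmin⟩ := exists_affine_minorant g hgp hgc hglsc
  obtain ⟨D, hD0, hD⟩ := exists_coercive L hsurj
  obtain ⟨⟨x₀, hx₀⟩, hbot⟩ := hgp
  set q : H₁ → ℝ := fun u => lam / 2 * ‖L u + c‖ ^ 2 with hq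
  set F : H₁ → EReal := fun u => g u + ((q u : ℝ) : EReal) with hF
  have hFbot : ∀ u, F u ≠ ⊥ := by
    intro u h
    rcases EReal.add_eq_bot_iff.1 h with h' | h'
    · exact hbot u h'
    · exact EReal.coe_ne_bot _ h'
  have hgtopF : ∀ u, g u = ⊤ → F u = ⊤ := by
    intro u h
    simp only [hF, h]
    exact EReal.top_add_coe _
  have hFx₀ : F x₀ ≠ ⊤ := by
    intro h
    rw [hF] at h
    simp only at h
    rw [(EReal.coe_toReal hx₀ (hbot x₀)).symm, ← EReal.coe_add] at h
    exact EReal.coe_ne_top _ h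
  -- lower bound
  set B : ℝ := b - (‖ψ‖ * D + lam * ‖c‖) ^ 2 / (2 * lam) with hB
  have hlow : ∀ u, ((B : ℝ) : EReal) ≤ F u := by
    intro u
    have h1 : ((ψ u + b : ℝ) : EReal) ≤ g u := hmin u
    have h2 : B ≤ ψ u + b + q u := by
      rw [hB]
      set t := ‖L u‖ with ht
      have ht0 : 0 ≤ t := norm_nonneg _
      have hu1 : ‖u‖ ≤ D * t := hD u
      have hψn : (0:ℝ) ≤ ‖ψ‖ := norm_nonneg _
      have hψ : -(‖ψ‖ * (D * t)) ≤ ψ u := by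
        have habs : |ψ u| ≤ ‖ψ‖ * ‖u‖ := by
          simpa using ψ.le_opNorm u
        nlinarith [neg_abs_le (ψ u), abs_nonneg (ψ u)]
      have hq1 : lam / 2 * (t ^ 2 - 2 * t * ‖c‖) ≤ q u := by
        have hexp : ‖L u + c‖ ^ 2 = ‖L u‖ ^ 2 + 2 * ⟪L u, c⟫ + ‖c‖ ^ 2 := by
          rw [← real_inner_self_eq_norm_sq, ← real_inner_self_eq_norm_sq,
            ← real_inner_self_eq_norm_sq]
          rw [inner_add_add_self, real_inner_comm c (L u)]
          ring
        have hcs : -(t * ‖c‖) ≤ ⟪L u, c⟫ := by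
          have h := abs_real_inner_le_norm (L u) c
          have := neg_abs_le (⟪L u, c⟫ : ℝ)
          nlinarith
        simp only [hq]
        nlinarith [sq_nonneg ‖c‖]
      have hdiv : (‖ψ‖ * D + lam * ‖c‖) ^ 2 / (2 * lam) * (2 * lam) =
          (‖ψ‖ * D + lam * ‖c‖) ^ 2 := div_mul_cancel₀ _ (by positivity)
      nlinarith [sq_nonneg (lam * t - (‖ψ‖ * D + lam * ‖c‖)), hdiv]
    calc ((B : ℝ) : EReal) ≤ ((ψ u + b + q u : ℝ) : EReal) := EReal.coe_le_coe_iff.2 h2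
      _ = ((ψ u + b : ℝ) : EReal) + ((q u : ℝ) : EReal) := EReal.coe_add _ _
      _ ≤ g u + ((q u : ℝ) : EReal) := add_le_add_left h1 _
  set m : EReal := ⨅ u, F u with hm
  have hmle : ∀ u, m ≤ F u := fun u => iInf_le _ u
  have hmtop : m ≠ ⊤ := fun h => hFx₀ (top_le_iff.1 (h ▸ hmle x₀))
  have hmbot : m ≠ ⊥ := by
    intro h
    have h2 : ((B : ℝ) : EReal) ≤ m := le_iInf hlow
    rw [h, le_bot_iff] at h2
    exact EReal.coe_ne_bot _ h2
  set mr : ℝ := m.toReal with hmrdef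
  have hmr : (mr : EReal) = m := EReal.coe_toReal hmtop hmbot
  -- midpoint estimate
  have key : ∀ u v : H₁, ∀ ga gb : ℝ, g u = (ga : EReal) → g v = (gb : EReal) →
      F ((1/2 : ℝ) • u + (1/2 : ℝ) • v) ≤
        (((ga + q u + (gb + q v)) / 2 - lam / 8 * ‖L u - L v‖ ^ 2 : ℝ) : EReal) := by
    intro u v ga gb hu hv
    have hg2 : g ((1/2 : ℝ) • u + (1/2 : ℝ) • v) ≤ (((ga + gb) / 2 : ℝ) : EReal) := by
      have h := hgc u v (1/2) (1/2) (by norm_num) (by norm_num) (by norm_num)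
      rw [hu, hv] at h
      refine le_trans h (le_of_eq ?_)
      rw [← EReal.coe_mul, ← EReal.coe_mul, ← EReal.coe_add]
      exact congrArg Real.toEReal (by ring)
    have hq2 : q ((1/2 : ℝ) • u + (1/2 : ℝ) • v) =
        (q u + q v) / 2 - lam / 8 * ‖L u - L v‖ ^ 2 := by
      have hLmid : L ((1/2 : ℝ) • u + (1/2 : ℝ) • v) + c =
          (1/2 : ℝ) • ((L u + c) + (L v + c)) := by
        rw [map_add, map_smul, map_smul]
        module
      have hLd : L u - L v = (L u + c) - (L v + c) := by abel
      have hpar := parallelogram_law_with_norm ℝ (L u + c) (L v + c)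
      have h1 : ‖(1/2 : ℝ) • ((L u + c) + (L v + c))‖ =
          (1/2 : ℝ) * ‖(L u + c) + (L v + c)‖ := by
        rw [norm_smul]
        simp
      simp only [hq, hLmid, hLd, h1]
      linear_combination (lam / 8) * hpar
    calc F ((1/2 : ℝ) • u + (1/2 : ℝ) • v)
        = g ((1/2 : ℝ) • u + (1/2 : ℝ) • v) +
          ((q ((1/2 : ℝ) • u + (1/2 : ℝ) • v) : ℝ) : EReal) := rfl
      _ ≤ (((ga + gb) / 2 : ℝ) : EReal) +
          ((q ((1/2 : ℝ) • u + (1/2 : ℝ) • v) : ℝ) : EReal) := add_le_add_left hg2 _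
      _ = (((ga + gb) / 2 + q ((1/2 : ℝ) • u + (1/2 : ℝ) • v) : ℝ) : EReal) :=
          (EReal.coe_add _ _).symm
      _ = (((ga + q u + (gb + q v)) / 2 - lam / 8 * ‖L u - L v‖ ^ 2 : ℝ) : EReal) := by
          rw [hq2]
          exact congrArg Real.toEReal (by ring)
  -- minimizing sequence
  have hseq : ∀ n : ℕ, ∃ z, F z < ((mr + (1/2) ^ n : ℝ) : EReal) := by
    intro n
    have h1 : m < ((mr + (1/2) ^ n : ℝ) : EReal) := by
      rw [← hmr]
      have hp : (0:ℝ) < (1/2) ^ n := by positivity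
      exact EReal.coe_lt_coe_iff.2 (by linarith)
    exact iInf_lt_iff.1 h1
  choose w hw using hseq
  have hwtop : ∀ n, F (w n) ≠ ⊤ := fun n => ne_top_of_lt (hw n)
  have hgwtop : ∀ n, g (w n) ≠ ⊤ := fun n h => hwtop n (hgtopF _ h)
  set ga : ℕ → ℝ := fun n => (g (w n)).toReal with hgadef
  have hga : ∀ n, g (w n) = ((ga n : ℝ) : EReal) :=
    fun n => (EReal.coe_toReal (hgwtop n) (hbot _)).symm
  have hFw : ∀ n, F (w n) = ((ga n + q (w n) : ℝ) : EReal) := by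
    intro n
    rw [hF]
    simp only
    rw [hga n, ← EReal.coe_add]
  have hup : ∀ n, ga n + q (w n) < mr + (1/2) ^ n := by
    intro n
    have := hw n
    rw [hFw n] at this
    exact EReal.coe_lt_coe_iff.1 this
  have hlo : ∀ n, mr ≤ ga n + q (w n) := by
    intro n
    have := hmle (w n)
    rw [hFw n, ← hmr] at this
    exact EReal.coe_le_coe_iff.1 this
  -- the pairwise estimate
  have hest : ∀ n p : ℕ, lam / 8 * ‖L (w n) - L (w p)‖ ^ 2 ≤ ((1/2) ^ n + (1/2) ^ p) / 2 := by
    intro n p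
    have h1 := key (w n) (w p) (ga n) (ga p) (hga n) (hga p)
    have h2 : (mr : EReal) ≤
        (((ga n + q (w n) + (ga p + q (w p))) / 2 - lam / 8 * ‖L (w n) - L (w p)‖ ^ 2 : ℝ)
          : EReal) := le_trans (by rw [hmr]; exact hmle _) h1
    have h3 := EReal.coe_le_coe_iff.1 h2
    have h4 := hup n
    have h5 := hup p
    linarith
  -- Cauchy
  have hcauchy : CauchySeq w := by
    rw [Metric.cauchySeq_iff]
    intro ε hε
    set δ : ℝ := ε / (D + 1) with hδ
    have hδpos : 0 < δ := div_pos hε (by linarith)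
    obtain ⟨N, hN⟩ := exists_pow_lt_of_lt_one
      (show (0:ℝ) < lam / 8 * δ ^ 2 by positivity) (by norm_num : (1/2 : ℝ) < 1)
    refine ⟨N, fun n hn p hp => ?_⟩
    have hmono : ∀ k, N ≤ k → ((1/2 : ℝ)) ^ k ≤ (1/2) ^ N :=
      fun k hk => pow_le_pow_of_le_one (by norm_num) (by norm_num) hk
    have h2 : lam / 8 * ‖L (w n) - L (w p)‖ ^ 2 < lam / 8 * δ ^ 2 :=
      lt_of_le_of_lt (le_trans (hest n p)
        (by have := hmono n hn; have := hmono p hp; linarith)) hN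
    have hl8 : (0:ℝ) < lam / 8 := by positivity
    have h3 : ‖L (w n) - L (w p)‖ ^ 2 < δ ^ 2 := lt_of_mul_lt_mul_left h2 hl8.le
    have h4 : ‖L (w n) - L (w p)‖ < δ := by
      nlinarith [norm_nonneg (L (w n) - L (w p))]
    have h5 : ‖w n - w p‖ ≤ D * ‖L (w n) - L (w p)‖ := by
      have := hD (w n - w p)
      rwa [map_sub] at this
    rw [dist_eq_norm]
    have h6 : D * ‖L (w n) - L (w p)‖ < (D + 1) * δ := by
      nlinarith [norm_nonneg (L (w n) - L (w p))]
    have h7 : (D + 1) * δ = ε := by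
      rw [hδ]
      field_simp
    linarith
  obtain ⟨uh, hlim⟩ := cauchySeq_tendsto_of_complete hcauchy
  have hqc : Continuous q := by
    rw [hq]
    exact continuous_const.mul (((L.continuous.add continuous_const).norm).pow 2)
  have hqt : Filter.Tendsto (fun n => q (w n)) Filter.atTop (nhds (q uh)) :=
    (hqc.tendsto uh).comp hlim
  have hguh : g uh ≤ ((mr - q uh : ℝ) : EReal) := by
    by_contra hcon
    push_neg at hcon
    obtain ⟨y, hy1, hy2⟩ := EReal.exists_between_coe_real hcon
    have hev1 : ∀ᶠ n in Filter.atTop, (y : EReal) < g (w n) :=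
      hlim.eventually (hglsc uh y hy2)
    have htend : Filter.Tendsto (fun n => mr + (1/2 : ℝ) ^ n - q (w n)) Filter.atTop
        (nhds (mr + 0 - q uh)) :=
      (tendsto_const_nhds.add
        (tendsto_pow_atTop_nhds_zero_of_lt_one (by norm_num) (by norm_num))).sub hqt
    have hev2 : ∀ᶠ n in Filter.atTop, mr + (1/2 : ℝ) ^ n - q (w n) < y :=
      htend.eventually_lt_const (by
        have := EReal.coe_lt_coe_iff.1 hy1
        linarith)
    have hev3 : ∀ᶠ n in Filter.atTop, (g (w n) : EReal) < (y : EReal) := by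
      filter_upwards [hev2] with n h2
      rw [hga n]
      exact EReal.coe_lt_coe_iff.2 (by have := hup n; linarith)
    obtain ⟨n, h1, h2⟩ := (hev1.and hev3).exists
    exact absurd h1 (not_lt.2 h2.le)
  have hFuh : F uh ≤ m := by
    have h1 : F uh ≤ ((mr - q uh : ℝ) : EReal) + ((q uh : ℝ) : EReal) :=
      add_le_add_left hguh _
    rw [← EReal.coe_add, sub_add_cancel, hmr] at h1
    exact h1
  have hex : ∀ u, F uh ≤ F u := fun u => le_trans hFuh (hmle u)
  have hguhtop : g uh ≠ ⊤ := fun h => (ne_top_of_le_ne_top hFx₀ (hex x₀)) (hgtopF _ h)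
  refine ⟨uh, ?_, ?_⟩
  · intro u
    have h := hex u
    simp only [hF, hq] at h
    exact h
  intro v hv
  have hvF : ∀ u, F v ≤ F u := by
    intro u
    have h := hv u
    simp only [hF, hq]
    exact h
  have heq : F v = F uh := le_antisymm (hvF uh) (hex v)
  have hvtop : F v ≠ ⊤ := ne_top_of_le_ne_top hFx₀ (hvF x₀)
  have hgvtop : g v ≠ ⊤ := fun h => hvtop (hgtopF _ h)
  set gv : ℝ := (g v).toReal with hgvdef
  set gu : ℝ := (g uh).toReal with hgudef
  have hgv : g v = ((gv : ℝ) : EReal) := (EReal.coe_toReal hgvtop (hbot _)).symm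
  have hgu : g uh = ((gu : ℝ) : EReal) := (EReal.coe_toReal hguhtop (hbot _)).symm
  have hFv : F v = ((gv + q v : ℝ) : EReal) := by
    rw [hF]; simp only; rw [hgv, ← EReal.coe_add]
  have hFu : F uh = ((gu + q uh : ℝ) : EReal) := by
    rw [hF]; simp only; rw [hgu, ← EReal.coe_add]
  have hreal : gv + q v = gu + q uh := by
    rw [hFv, hFu] at heq
    exact EReal.coe_eq_coe_iff.1 heq
  have hmid := key v uh gv gu hgv hgu
  have h3 : F v ≤ F ((1/2 : ℝ) • v + (1/2 : ℝ) • uh) := hvF _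
  have h4 : ((gv + q v : ℝ) : EReal) ≤
      (((gv + q v + (gu + q uh)) / 2 - lam / 8 * ‖L v - L uh‖ ^ 2 : ℝ) : EReal) := by
    rw [← hFv]
    exact le_trans h3 hmid
  have h5 := EReal.coe_le_coe_iff.1 h4
  have h6 : lam / 8 * ‖L v - L uh‖ ^ 2 ≤ 0 := by linarith
  have hX : ‖L v - L uh‖ ^ 2 ≤ 0 := by
    by_contra hXc
    push_neg at hXc
    have := mul_pos (show (0:ℝ) < lam / 8 by positivity) hXc
    linarith
  have h7 : ‖L v - L uh‖ = 0 :=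
    (pow_eq_zero_iff two_ne_zero).1 (le_antisymm hX (sq_nonneg _))
  have h8 : ‖v - uh‖ ≤ D * ‖L v - L uh‖ := by
    have := hD (v - uh)
    rwa [map_sub] at this
  rw [h7, mul_zero] at h8
  have : v - uh = 0 := norm_le_zero_iff.1 h8
  exact sub_eq_zero.1 this
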